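/- The projective space P(F_{q^n}) minus the class of 1 is a disjoint union of (q^{n−1}−1)/(q−1) projectivized φ-orbits, where φ(α,λ) = α/(1+λα); i.e., the sets {φ(α,λ)F_q^* : λ ∈ F_q} for α ∈ F_{q^n}∖F_q partition P(F_{q^n})∖{F_q^*}, each having size q. -/

import Mathlib

/-- The projectivized orbit of `α` under `φ(α,λ) = α/(1+λα)`. -/
def projOrb (F K : Type) [Field F] [Field K] [Algebra F K] (α : K) :
    Set (Submodule F K) :=
  {W | ∃ l : F, W = Submodule.span F {α / (1 + l • α)}}

section Aux

variable {F K : Type} [Field F] [Field K] [Algebra F K]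

private lemma aux_map_ne_zero {u : F} (hu : u ≠ 0) : algebraMap F K u ≠ 0 := by
  simpa using hu

private lemma aux_ne_zero {x : K} (hx : x ∉ Set.range (algebraMap F K)) : x ≠ 0 := by
  rintro rfl
  exact hx ⟨0, by simp⟩

private lemma aux_inv_not_mem {x : K} (hx : x ∉ Set.range (algebraMap F K)) :
    x⁻¹ ∉ Set.range (algebraMap F K) := by
  rintro ⟨c, hc⟩
  exact hx ⟨c⁻¹, by rw [map_inv₀, hc, inv_inv]⟩

private lemma aux_indep {x : K} (hx : x ∉ Set.range (algebraMap F K)) {a b : F}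
    (h : algebraMap F K a * x + algebraMap F K b = 0) : a = 0 ∧ b = 0 := by
  by_cases ha : a = 0
  · refine ⟨ha, ?_⟩
    have : algebraMap F K b = 0 := by simpa [ha] using h
    simpa using this
  · exfalso
    apply hx
    refine ⟨-b / a, ?_⟩
    have ha' : algebraMap F K a ≠ 0 := aux_map_ne_zero ha
    rw [map_div₀, map_neg]
    field_simp
    linear_combination -h

private lemma aux_indep' {x : K} (hx : x ∉ Set.range (algebraMap F K)) {a b a' b' : F}
    (h : algebraMap F K a * x + algebraMap F K b
        = algebraMap F K a' * x + algebraMap F K b') :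
    a = a' ∧ b = b' := by
  have h2 : algebraMap F K (a - a') * x + algebraMap F K (b - b') = 0 := by
    rw [map_sub, map_sub]; linear_combination h
  obtain ⟨h3, h4⟩ := aux_indep hx h2
  exact ⟨sub_eq_zero.mp h3, sub_eq_zero.mp h4⟩

/-- The "inverse orbit" of `α`: the affine orbit of `α⁻¹` under `x ↦ u x + v`. -/
private def invOrb (F : Type) {K : Type} [Field F] [Field K] [Algebra F K] (α : K) : Set K :=
  {x | ∃ u v : F, u ≠ 0 ∧ x = algebraMap F K u * α⁻¹ + algebraMap F K v}

private lemma invOrb_not_mem {α x : K} (hα : α ∉ Set.range (algebraMap F K))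
    (hx : x ∈ invOrb F α) : x ∉ Set.range (algebraMap F K) := by
  obtain ⟨u, v, hu, rfl⟩ := hx
  rintro ⟨c, hc⟩
  apply aux_inv_not_mem hα
  refine ⟨(c - v) / u, ?_⟩
  have hu' : algebraMap F K u ≠ 0 := aux_map_ne_zero hu
  rw [map_div₀, map_sub, div_eq_iff hu']
  linear_combination hc

private lemma one_add_smul_ne {α : K} (hα : α ∉ Set.range (algebraMap F K)) (l : F) :
    1 + l • α ≠ 0 := by
  intro h
  rw [Algebra.smul_def] at h
  have h' : algebraMap F K l * α + algebraMap F K 1 = 0 := by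
    rw [map_one]; linear_combination h
  exact one_ne_zero (aux_indep hα h').2

private lemma inv_phi {α : K} (hα : α ∉ Set.range (algebraMap F K)) (l : F) :
    (α / (1 + l • α))⁻¹ = α⁻¹ + algebraMap F K l := by
  have h0 : α ≠ 0 := aux_ne_zero hα
  have h1 : 1 + l • α ≠ 0 := one_add_smul_ne hα l
  rw [Algebra.smul_def] at h1 ⊢
  field_simp

private lemma mem_projOrb_iff {α : K} (hα : α ∉ Set.range (algebraMap F K))
    {W : Submodule F K} :
    W ∈ projOrb F K α
      ↔ ∃ γ : K, γ ≠ 0 ∧ γ⁻¹ ∈ invOrb F α ∧ W = Submodule.span F {γ} := by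
  constructor
  · rintro ⟨l, rfl⟩
    refine ⟨α / (1 + l • α), div_ne_zero (aux_ne_zero hα) (one_add_smul_ne hα l),
      ⟨1, l, one_ne_zero, by rw [inv_phi hα, map_one, one_mul]⟩, rfl⟩
  · rintro ⟨γ, hγ0, ⟨u, v, hu, huv⟩, rfl⟩
    have hu' : algebraMap F K u ≠ 0 := aux_map_ne_zero hu
    have hγ' : γ⁻¹ ≠ 0 := inv_ne_zero hγ0
    refine ⟨v / u, ?_⟩
    have key : α / (1 + (v / u) • α) = u • γ := by
      apply inv_injective
      rw [inv_phi hα, Algebra.smul_def, mul_inv, map_div₀, huv]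
      field_simp
    rw [key, Submodule.span_singleton_smul_eq (IsUnit.mk0 u hu)]

private lemma invOrb_subset {α β : K} (h : β⁻¹ ∈ invOrb F α) :
    invOrb F β ⊆ invOrb F α := by
  obtain ⟨u, v, hu, huv⟩ := h
  rintro x ⟨a, b, ha, rfl⟩
  refine ⟨a * u, a * v + b, mul_ne_zero ha hu, ?_⟩
  rw [huv, map_mul, map_add, map_mul]
  ring

private lemma mem_invOrb_symm {α β : K} (h : β⁻¹ ∈ invOrb F α) : α⁻¹ ∈ invOrb F β := by
  obtain ⟨u, v, hu, huv⟩ := h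
  have hu' : algebraMap F K u ≠ 0 := aux_map_ne_zero hu
  refine ⟨u⁻¹, -(v / u), inv_ne_zero hu, ?_⟩
  rw [huv, map_inv₀, map_neg, map_div₀]
  field_simp
  ring

private lemma invOrb_eq_of_mem {α β : K} (h : β⁻¹ ∈ invOrb F α) :
    invOrb F β = invOrb F α :=
  le_antisymm (invOrb_subset h) (invOrb_subset (mem_invOrb_symm h))

private lemma invOrb_smul {α x : K} (hx : x ∈ invOrb F α) {c : F} (hc : c ≠ 0) :
    algebraMap F K c * x ∈ invOrb F α := by
  obtain ⟨u, v, hu, rfl⟩ := hx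
  refine ⟨c * u, c * v, mul_ne_zero hc hu, ?_⟩
  rw [map_mul, map_mul]
  ring

private lemma projOrb_eq_of_invOrb_eq {α β : K} (hα : α ∉ Set.range (algebraMap F K))
    (hβ : β ∉ Set.range (algebraMap F K)) (h : invOrb F α = invOrb F β) :
    projOrb F K α = projOrb F K β := by
  ext W
  rw [show (W ∈ projOrb F K α) ↔ _ from mem_projOrb_iff hα,
    show (W ∈ projOrb F K β) ↔ _ from mem_projOrb_iff hβ, h]

private lemma exists_scalar_of_span_eq {γ δ : K}
    (h : Submodule.span F {γ} = Submodule.span F {δ}) (hδ : δ ≠ 0) :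
    ∃ c : F, c ≠ 0 ∧ δ = algebraMap F K c * γ := by
  have hmem : δ ∈ Submodule.span F {γ} := h ▸ Submodule.mem_span_singleton_self δ
  obtain ⟨c, hc⟩ := Submodule.mem_span_singleton.mp hmem
  refine ⟨c, ?_, by rw [← Algebra.smul_def, hc]⟩
  rintro rfl
  rw [zero_smul] at hc
  exact hδ hc.symm

private lemma span_self_mem_projOrb (α : K) :
    Submodule.span F {α} ∈ projOrb F K α :=
  ⟨0, by norm_num⟩

private lemma inv_mem_invOrb_of_projOrb_eq {α β : K}
    (hα : α ∉ Set.range (algebraMap F K)) (hβ : β ∉ Set.range (algebraMap F K))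
    (h : projOrb F K β = projOrb F K α) : β⁻¹ ∈ invOrb F α := by
  have hmem : Submodule.span F {β} ∈ projOrb F K α := h ▸ span_self_mem_projOrb β
  obtain ⟨γ, hγ0, hγinv, hspan⟩ := (mem_projOrb_iff hα).mp hmem
  obtain ⟨c, hc, hβeq⟩ := exists_scalar_of_span_eq hspan.symm (aux_ne_zero hβ)
  rw [hβeq, mul_inv, ← map_inv₀]
  exact invOrb_smul hγinv (inv_ne_zero hc)

private lemma card_eq_card_mul_of_fibers {A B : Type} [Finite A] [Finite B] (f : A → B)
    (k : ℕ) (h : ∀ b : B, Nat.card {a : A // f a = b} = k) :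
    Nat.card A = Nat.card B * k := by
  classical
  cases nonempty_fintype A
  cases nonempty_fintype B
  rw [Nat.card_eq_fintype_card, Nat.card_eq_fintype_card,
    ← Fintype.card_congr (Equiv.sigmaFiberEquiv f), Fintype.card_sigma]
  have h' : ∀ b : B, Fintype.card {a : A // f a = b} = k := fun b => by
    rw [← Nat.card_eq_fintype_card]; exact h b
  simp [h']

private lemma card_invOrb [Fintype F] [Fintype K] {α : K}
    (hα : α ∉ Set.range (algebraMap F K)) :
    Nat.card ↥(invOrb F α) = Fintype.card F * (Fintype.card F - 1) := by
  have hα' : α⁻¹ ∉ Set.range (algebraMap F K) := aux_inv_not_mem hα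
  have hrange : invOrb F α = Set.range (fun p : {u : F // u ≠ 0} × F =>
      algebraMap F K p.1.1 * α⁻¹ + algebraMap F K p.2) := by
    ext x
    constructor
    · rintro ⟨u, v, hu, rfl⟩
      exact ⟨⟨⟨u, hu⟩, v⟩, rfl⟩
    · rintro ⟨⟨⟨u, hu⟩, v⟩, rfl⟩
      exact ⟨u, v, hu, rfl⟩
  have hinj : Function.Injective (fun p : {u : F // u ≠ 0} × F =>
      algebraMap F K p.1.1 * α⁻¹ + algebraMap F K p.2) := by
    rintro ⟨⟨u, hu⟩, v⟩ ⟨⟨u', hu'⟩, v'⟩ h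
    obtain ⟨h1, h2⟩ := aux_indep' hα' h
    exact Prod.ext (Subtype.ext h1) h2
  rw [hrange, Nat.card_range_of_injective hinj, Nat.card_prod, Nat.card_congr
    (unitsEquivNeZero (G₀ := F)).symm, Nat.card_units, Nat.card_eq_fintype_card]
  exact Nat.mul_comm _ _

end Aux

/-- `P(F_{q^n}) ∖ {⟨1⟩}` is the disjoint union of `(q^{n-1}-1)/(q-1)`
projectivized `φ`-orbits, each of size `q`. -/
theorem stmt_13 (F K : Type) [Field F] [Field K] [Algebra F K]
    [Fintype F] [Fintype K] (q n : ℕ)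
    (hq : Fintype.card F = q) (hn : Module.finrank F K = n) (hn2 : 2 ≤ n) :
    (∀ α β : K, α ∉ Set.range (algebraMap F K) → β ∉ Set.range (algebraMap F K) →
      projOrb F K α = projOrb F K β ∨ Disjoint (projOrb F K α) (projOrb F K β)) ∧
    (⋃ α ∈ {γ : K | γ ∉ Set.range (algebraMap F K)}, projOrb F K α)
      = {W : Submodule F K | ∃ γ : K, γ ≠ 0 ∧ W = Submodule.span F {γ} ∧
          W ≠ Submodule.span F {1}} ∧
    (∀ α : K, α ∉ Set.range (algebraMap F K) →
      Nat.card ↥(projOrb F K α) = q) ∧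
    Nat.card {S : Set (Submodule F K) //
        ∃ α : K, α ∉ Set.range (algebraMap F K) ∧ S = projOrb F K α}
      = (q ^ (n - 1) - 1) / (q - 1) := by
  classical
  subst hq
  refine ⟨?_, ?_, ?_, ?_⟩
  · -- equality or disjointness
    intro α β hα hβ
    by_cases h : Disjoint (projOrb F K α) (projOrb F K β)
    · exact Or.inr h
    left
    rw [Set.not_disjoint_iff] at h
    obtain ⟨W, hWα, hWβ⟩ := h
    obtain ⟨γ, hγ0, hγinv, rfl⟩ := (mem_projOrb_iff hα).mp hWα
    obtain ⟨δ, hδ0, hδinv, hspan⟩ := (mem_projOrb_iff hβ).mp hWβ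
    obtain ⟨c, hc, hδeq⟩ := exists_scalar_of_span_eq hspan hδ0
    have hδα : δ⁻¹ ∈ invOrb F α := by
      rw [hδeq, mul_inv, ← map_inv₀]
      exact invOrb_smul hγinv (inv_ne_zero hc)
    exact projOrb_eq_of_invOrb_eq hα hβ
      ((invOrb_eq_of_mem hδα).symm.trans (invOrb_eq_of_mem hδinv))
  · -- the union
    ext W
    simp only [Set.mem_iUnion, Set.mem_setOf_eq, exists_prop]
    constructor
    · rintro ⟨α, hα, hW⟩
      obtain ⟨γ, hγ0, hγinv, rfl⟩ := (mem_projOrb_iff hα).mp hW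
      refine ⟨γ, hγ0, rfl, ?_⟩
      intro hspan
      obtain ⟨c, hc, hceq⟩ := exists_scalar_of_span_eq hspan.symm hγ0
      have : γ ∈ Set.range (algebraMap F K) := ⟨c, by rw [hceq, mul_one]⟩
      exact aux_inv_not_mem (invOrb_not_mem hα hγinv) (by rwa [inv_inv])
    · rintro ⟨γ, hγ0, rfl, hne⟩
      have hγR : γ ∉ Set.range (algebraMap F K) := by
        rintro ⟨c, rfl⟩
        apply hne
        rw [Algebra.algebraMap_eq_smul_one, Submodule.span_singleton_smul_eq]
        exact IsUnit.mk0 c (fun h => hγ0 (by rw [h]; simp))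
      exact ⟨γ, hγR, ⟨0, by norm_num⟩⟩
  · -- each orbit has q elements
    intro α hα
    have hα' : α⁻¹ ∉ Set.range (algebraMap F K) := aux_inv_not_mem hα
    set f : F → Submodule F K := fun l => Submodule.span F {α / (1 + l • α)} with hf
    have hrange : projOrb F K α = Set.range f :=
      Set.ext fun W => ⟨fun ⟨l, h⟩ => ⟨l, h.symm⟩, fun ⟨l, h⟩ => ⟨l, h.symm⟩⟩
    have hinj : Function.Injective f := by
      intro l m h
      have hl0 : α / (1 + l • α) ≠ 0 :=
        div_ne_zero (aux_ne_zero hα) (one_add_smul_ne hα l)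
      obtain ⟨c, hc, hceq⟩ := exists_scalar_of_span_eq h
        (div_ne_zero (aux_ne_zero hα) (one_add_smul_ne hα m))
      have hceqinv := congrArg Inv.inv hceq
      rw [inv_phi hα, mul_inv, inv_phi hα, ← map_inv₀] at hceqinv
      have hkey : algebraMap F K 1 * α⁻¹ + algebraMap F K m
          = algebraMap F K c⁻¹ * α⁻¹ + algebraMap F K (c⁻¹ * l) := by
        rw [map_one, one_mul, map_mul]
        linear_combination hceqinv
      obtain ⟨h1, h2⟩ := aux_indep' hα' hkey
      have hc1 : c = 1 := by
        have := h1.symm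
        field_simp at this
        exact this.symm
      rw [hc1] at h2
      simp at h2
      exact h2.symm
    rw [hrange, Nat.card_range_of_injective hinj, Nat.card_eq_fintype_card]
  · -- the number of orbits
    haveI : Finite (Submodule F K) :=
      Finite.of_injective (fun W => (W : Set K)) SetLike.coe_injective
    set q := Fintype.card F with hqdef
    have hq2 : 2 ≤ q := Fintype.one_lt_card
    set A := {β : K // β ∉ Set.range (algebraMap F K)} with hA
    set T := {S : Set (Submodule F K) //
        ∃ α : K, α ∉ Set.range (algebraMap F K) ∧ S = projOrb F K α} with hT
    set f : A → T := fun β => ⟨projOrb F K β.1, β.1, β.2, rfl⟩ with hfdef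
    have hfib : ∀ t : T, Nat.card {a : A // f a = t} = q * (q - 1) := by
      rintro ⟨S, hS⟩
      obtain ⟨α, hα, rfl⟩ := hS
      have e : {a : A // f a = ⟨projOrb F K α, α, hα, rfl⟩} ≃ ↥(invOrb F α) :=
        { toFun := fun a => ⟨(a.1.1)⁻¹, by
            have h := congrArg Subtype.val a.2
            exact inv_mem_invOrb_of_projOrb_eq hα a.1.2 h⟩
          invFun := fun x => by
            refine ⟨⟨(x.1)⁻¹, aux_inv_not_mem (invOrb_not_mem hα x.2)⟩, ?_⟩
            have hxmem : ((x.1)⁻¹)⁻¹ ∈ invOrb F α := by rw [inv_inv]; exact x.2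
            exact Subtype.ext (projOrb_eq_of_invOrb_eq
              (aux_inv_not_mem (invOrb_not_mem hα x.2)) hα (invOrb_eq_of_mem hxmem))
          left_inv := fun a => by
            apply Subtype.ext; apply Subtype.ext; simp
          right_inv := fun x => by
            apply Subtype.ext; simp }
      rw [Nat.card_congr e, card_invOrb hα]
    have hcardA : Nat.card A = q ^ n - q := by
      have hsum : Nat.card K = Nat.card {β : K // β ∈ Set.range (algebraMap F K)}
          + Nat.card A := by
        rw [← Nat.card_sum]
        exact Nat.card_congr (Equiv.sumCompl (· ∈ Set.range (algebraMap F K))).symm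
      have hR : Nat.card {β : K // β ∈ Set.range (algebraMap F K)} = q := by
        rw [Nat.card_congr (Equiv.ofInjective (algebraMap F K)
          (algebraMap F K).injective).symm, Nat.card_eq_fintype_card]
      have hK : Nat.card K = q ^ n := by
        rw [Nat.card_eq_fintype_card, Module.card_eq_pow_finrank (K := F) (V := K), hn]
      omega
    have hmain : Nat.card A = Nat.card T * (q * (q - 1)) :=
      card_eq_card_mul_of_fibers f (q * (q - 1)) hfib
    -- arithmetic
    set N := Nat.card T with hN
    set m := q ^ (n - 1) with hm
    have hqm : q ^ n = q * m := by
      rw [hm, ← pow_succ']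
      congr 1
      omega
    have hm1 : 1 ≤ m := Nat.one_le_pow _ _ (by omega)
    have hkey : m - 1 = N * (q - 1) := by
      have h1 : q * m - q = N * (q * (q - 1)) := by rw [← hqm, ← hcardA, hmain]
      have hq1 : 1 ≤ q := by omega
      have h2 : (q : ℤ) * ((m : ℤ) - 1) = q * (N * ((q : ℤ) - 1)) := by
        have hle : q ≤ q * m := Nat.le_mul_of_pos_right q (by omega)
        have hcast := congrArg (fun x : ℕ => (x : ℤ)) h1
        push_cast [Nat.cast_sub hle, Nat.cast_sub hq1] at hcast
        linear_combination hcast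
      have hq0 : (q : ℤ) ≠ 0 := by exact_mod_cast (by omega : q ≠ 0)
      have h3 : (m : ℤ) - 1 = N * ((q : ℤ) - 1) := mul_left_cancel₀ hq0 h2
      have h4 : (↑(m - 1) : ℤ) = ↑(N * (q - 1)) := by
        push_cast [Nat.cast_sub hm1, Nat.cast_sub hq1]
        exact h3
      exact_mod_cast h4
    rw [hkey, Nat.mul_div_cancel _ (by omega : 0 < q - 1)]
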